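/- Let u ∈ ℂ^m with u ≠ 0, and r ∈ ℂ^n. Then every matrix Δ ∈ ℂ^{n×m} with Δ u = r satisfies ‖Δ‖_F ≥ ‖r‖/‖u‖, and equality is attained by Δ = (r uᴴ)/‖u‖². -/

import Mathlib

open Matrix

/-- Euclidean norm of a complex vector. -/
noncomputable def vecEnorm {n : ℕ} (x : Fin n → ℂ) : ℝ := Real.sqrt (∑ i, ‖x i‖ ^ 2)

/-- Frobenius norm of a matrix. -/
noncomputable def frobNorm {n m : ℕ} (A : Matrix (Fin n) (Fin m) ℂ) : ℝ :=
  Real.sqrt (∑ i, ∑ j, ‖A i j‖ ^ 2)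

lemma vecEnorm_nonneg {n : ℕ} (x : Fin n → ℂ) : 0 ≤ vecEnorm x := Real.sqrt_nonneg _

lemma vecEnorm_sq {n : ℕ} (x : Fin n → ℂ) : vecEnorm x ^ 2 = ∑ i, ‖x i‖ ^ 2 :=
  Real.sq_sqrt (Finset.sum_nonneg fun i _ => sq_nonneg _)

lemma vecEnorm_pos {n : ℕ} {x : Fin n → ℂ} (hx : x ≠ 0) : 0 < vecEnorm x := by
  apply Real.sqrt_pos.2
  obtain ⟨i, hi⟩ : ∃ i, x i ≠ 0 := by
    by_contra h; push_neg at h; exact hx (funext h)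
  have h0 : 0 < ‖x i‖ ^ 2 := pow_pos (norm_pos_iff.2 hi) 2
  exact h0.trans_le (Finset.single_le_sum (f := fun j => ‖x j‖ ^ 2)
    (fun j _ => sq_nonneg _) (Finset.mem_univ i))

theorem frobenius_one_constraint {n m : ℕ}
    (u : Fin m → ℂ) (r : Fin n → ℂ) (hu : u ≠ 0) :
    (∀ Δ : Matrix (Fin n) (Fin m) ℂ, Δ.mulVec u = r → vecEnorm r / vecEnorm u ≤ frobNorm Δ) ∧
      (Matrix.mulVec (fun i j => r i * (starRingEnd ℂ) (u j) / (vecEnorm u : ℂ) ^ 2) u = r ∧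
        frobNorm (fun i j => r i * (starRingEnd ℂ) (u j) / (vecEnorm u : ℂ) ^ 2)
          = vecEnorm r / vecEnorm u) := by
  have hupos : 0 < vecEnorm u := vecEnorm_pos hu
  have husq : (vecEnorm u : ℝ) ^ 2 = ∑ j, ‖u j‖ ^ 2 := vecEnorm_sq u
  constructor
  · intro Δ hΔ
    rw [div_le_iff₀ hupos]
    have key : vecEnorm r ^ 2 ≤ (frobNorm Δ * vecEnorm u) ^ 2 := by
      rw [mul_pow, vecEnorm_sq]
      have hfro : frobNorm Δ ^ 2 = ∑ i, ∑ j, ‖Δ i j‖ ^ 2 :=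
        Real.sq_sqrt (Finset.sum_nonneg fun i _ => Finset.sum_nonneg fun j _ => sq_nonneg _)
      rw [hfro, husq, Finset.sum_mul]
      apply Finset.sum_le_sum
      intro i _
      have hri : r i = ∑ j, Δ i j * u j := by
        rw [← hΔ]; rfl
      have h1 : ‖r i‖ ≤ ∑ j, ‖Δ i j‖ * ‖u j‖ := by
        rw [hri]
        exact (norm_sum_le _ _).trans (le_of_eq (Finset.sum_congr rfl fun j _ => norm_mul _ _))
      calc ‖r i‖ ^ 2 ≤ (∑ j, ‖Δ i j‖ * ‖u j‖) ^ 2 := by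
            apply pow_le_pow_left₀ (norm_nonneg _) h1
        _ ≤ (∑ j, ‖Δ i j‖ ^ 2) * ∑ j, ‖u j‖ ^ 2 := Finset.sum_mul_sq_le_sq_mul_sq _ _ _
    have := Real.sqrt_le_sqrt key
    calc vecEnorm r = Real.sqrt (vecEnorm r ^ 2) := (Real.sqrt_sq (vecEnorm_nonneg r)).symm
      _ ≤ Real.sqrt ((frobNorm Δ * vecEnorm u) ^ 2) := Real.sqrt_le_sqrt key
      _ = frobNorm Δ * vecEnorm u := Real.sqrt_sq (mul_nonneg (Real.sqrt_nonneg _) hupos.le)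
  · have hc : ((vecEnorm u : ℂ)) ^ 2 ≠ 0 :=
      pow_ne_zero 2 (Complex.ofReal_ne_zero.2 hupos.ne')
    constructor
    · funext i
      simp only [Matrix.mulVec, dotProduct]
      have : ∑ j, r i * (starRingEnd ℂ) (u j) / (vecEnorm u : ℂ) ^ 2 * u j
          = r i * (∑ j, (starRingEnd ℂ) (u j) * u j) / (vecEnorm u : ℂ) ^ 2 := by
        rw [Finset.mul_sum, Finset.sum_div]
        apply Finset.sum_congr rfl
        intro j _
        ring
      rw [this]
      have hsum : ∑ j, (starRingEnd ℂ) (u j) * u j = (vecEnorm u : ℂ) ^ 2 := by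
        have h1 : ∀ j, (starRingEnd ℂ) (u j) * u j = ((‖u j‖ ^ 2 : ℝ) : ℂ) := by
          intro j
          rw [mul_comm, Complex.mul_conj]
          rw [Complex.normSq_eq_norm_sq]
        rw [Finset.sum_congr rfl fun j _ => h1 j, ← Complex.ofReal_sum, ← husq]
        norm_cast
      rw [hsum, mul_div_assoc, div_self hc, mul_one]
    · have hnorm : ∀ i j, ‖r i * (starRingEnd ℂ) (u j) / (vecEnorm u : ℂ) ^ 2‖ ^ 2
          = ‖r i‖ ^ 2 * ‖u j‖ ^ 2 / (vecEnorm u) ^ 4 := by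
        intro i j
        rw [norm_div, norm_mul]
        have h1 : ‖(starRingEnd ℂ) (u j)‖ = ‖u j‖ := by simp
        have h2 : ‖((vecEnorm u : ℂ)) ^ 2‖ = (vecEnorm u) ^ 2 := by
          rw [norm_pow, Complex.norm_real, Real.norm_of_nonneg hupos.le]
        rw [h1, h2, div_pow]
        ring
      unfold frobNorm
      have : ∑ i, ∑ j, ‖r i * (starRingEnd ℂ) (u j) / (vecEnorm u : ℂ) ^ 2‖ ^ 2
          = (vecEnorm r) ^ 2 / (vecEnorm u) ^ 2 := by
        simp_rw [hnorm]
        have : ∑ i, ∑ j, ‖r i‖ ^ 2 * ‖u j‖ ^ 2 / (vecEnorm u) ^ 4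
            = (∑ i, ‖r i‖ ^ 2) * (∑ j, ‖u j‖ ^ 2) / (vecEnorm u) ^ 4 := by
          rw [Finset.sum_mul_sum, Finset.sum_div]
          apply Finset.sum_congr rfl
          intro i _
          rw [Finset.sum_div]
        rw [this, ← vecEnorm_sq r, ← husq]
        field_simp
      rw [this, Real.sqrt_div (sq_nonneg _), Real.sqrt_sq (vecEnorm_nonneg r), Real.sqrt_sq (vecEnorm_nonneg u)]
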